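/- Let Φ be a quantum channel on n×n complex matrices, let ρ be a positive semidefinite matrix with Φ(ρ) = ρ, and let Q be the orthogonal projection onto the range (support) of ρ. Then Tr[(1 − Q)Φ(Q)] = 0, and every positive semidefinite matrix σ with QσQ = σ satisfies QΦ(σ)Q = Φ(σ) (i.e., the support of Φ(σ) remains inside the range of Q). -/

import Mathlib

open Matrix Kronecker BigOperators
open scoped ComplexOrder

noncomputable def trB {A B : Type*} [Fintype B] (ρ : Matrix (A × B) (A × B) ℂ) :
    Matrix A A ℂ :=
  Matrix.of fun a a' => ∑ b, ρ (a, b) (a', b)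

noncomputable def trA {A B : Type*} [Fintype A] (ρ : Matrix (A × B) (A × B) ℂ) :
    Matrix B B ℂ :=
  Matrix.of fun b b' => ∑ a, ρ (a, b) (a, b')

def IsState {A : Type*} [Fintype A] (ρ : Matrix A A ℂ) : Prop :=
  ρ.PosSemidef ∧ ρ.trace = 1

def IsQChannel {m n : Type*} [Fintype m] [DecidableEq m] [Fintype n]
    (Φ : Matrix m m ℂ → Matrix n n ℂ) : Prop :=
  ∃ (N : ℕ) (K : Fin N → Matrix n m ℂ),
    (∀ X, Φ X = ∑ i, K i * X * (K i)ᴴ) ∧ (∑ i, (K i)ᴴ * K i = 1)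

def IsOrthProjFamily {A : Type*} [Fintype A] [DecidableEq A] {N : ℕ}
    (P : Fin N → Matrix A A ℂ) : Prop :=
  (∀ k, (P k).IsHermitian) ∧ (∀ k, P k * P k = P k) ∧
  (∀ j k, j ≠ k → P j * P k = 0) ∧ (∑ k, P k = 1)

def IsTQQ {A B : Type*} [Fintype A] [DecidableEq A] [Fintype B] [DecidableEq B]
    (ρ : Matrix (A × B) (A × B) ℂ) : Prop :=
  ¬ ∃ (N : ℕ) (P : Fin N → Matrix A A ℂ),
      IsOrthProjFamily P ∧ (∃ j k, j ≠ k ∧ P j ≠ 0 ∧ P k ≠ 0) ∧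
      ∑ k, (P k ⊗ₖ (1 : Matrix B B ℂ)) * ρ * (P k ⊗ₖ (1 : Matrix B B ℂ)) = ρ

noncomputable def vnEntropy {A : Type*} [Fintype A] [DecidableEq A]
    (ρ : Matrix A A ℂ) : ℝ :=
  if h : ρ.IsHermitian then -∑ i, (h.eigenvalues i) * Real.log (h.eigenvalues i) else 0

noncomputable def mutInfo {A B : Type*} [Fintype A] [DecidableEq A] [Fintype B] [DecidableEq B]
    (ρ : Matrix (A × B) (A × B) ℂ) : ℝ :=
  vnEntropy (trB ρ) + vnEntropy (trA ρ) - vnEntropy ρ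


def IsUnitalCP {n : Type*} [Fintype n] [DecidableEq n]
    (Φ : Matrix n n ℂ → Matrix n n ℂ) : Prop :=
  ∃ (N : ℕ) (K : Fin N → Matrix n n ℂ),
    (∀ X, Φ X = ∑ i, K i * X * (K i)ᴴ) ∧ (∑ i, K i * (K i)ᴴ = 1)

lemma aux_sum_mul_conjTranspose_eq_zero {m p N : ℕ}
    (M : Fin N → Matrix (Fin m) (Fin p) ℂ)
    (h : ∑ i, M i * (M i)ᴴ = 0) : ∀ i, M i = 0 := by
  have htr : ∑ i, (M i * (M i)ᴴ).trace = 0 := by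
    rw [← Matrix.trace_sum, h, Matrix.trace_zero]
  have hform : ∀ i, (M i * (M i)ᴴ).trace =
      ((∑ k, ∑ j, Complex.normSq (M i k j) : ℝ) : ℂ) := by
    intro i
    simp only [Matrix.trace, Matrix.diag, Matrix.mul_apply, Matrix.conjTranspose_apply]
    push_cast
    refine Finset.sum_congr rfl fun k _ => Finset.sum_congr rfl fun j _ => ?_
    rw [← Complex.mul_conj]
    rfl
  have hreal : ∑ i, (∑ k, ∑ j, Complex.normSq (M i k j)) = 0 := by
    have : ((∑ i, ∑ k, ∑ j, Complex.normSq (M i k j) : ℝ) : ℂ) = 0 := by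
      push_cast
      rw [← htr]
      exact (Finset.sum_congr rfl fun i _ => by rw [hform i]; push_cast; ring).symm
    exact_mod_cast this
  have hnn : ∀ i ∈ Finset.univ, (0:ℝ) ≤ ∑ k, ∑ j, Complex.normSq (M i k j) :=
    fun i _ => Finset.sum_nonneg fun k _ => Finset.sum_nonneg fun j _ => Complex.normSq_nonneg _
  intro i
  have hi := (Finset.sum_eq_zero_iff_of_nonneg hnn).mp hreal i (Finset.mem_univ i)
  ext k j
  have hk := (Finset.sum_eq_zero_iff_of_nonneg
    (fun k _ => Finset.sum_nonneg fun j _ => Complex.normSq_nonneg (M i k j))).mp hi k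
    (Finset.mem_univ k)
  have hj := (Finset.sum_eq_zero_iff_of_nonneg
    (fun j _ => Complex.normSq_nonneg (M i k j))).mp hk j (Finset.mem_univ j)
  simpa using Complex.normSq_eq_zero.mp hj

namespace Matrix.PosSemidef

open scoped MatrixOrder in
noncomputable def sqrt {n : ℕ} {A : Matrix (Fin n) (Fin n) ℂ} (_ : A.PosSemidef) :
    Matrix (Fin n) (Fin n) ℂ :=
  CFC.sqrt A

open scoped MatrixOrder in
lemma sqrt_mul_self {n : ℕ} {A : Matrix (Fin n) (Fin n) ℂ} (hA : A.PosSemidef) :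
    hA.sqrt * hA.sqrt = A :=
  CFC.sqrt_mul_sqrt_self A hA.nonneg

open scoped MatrixOrder in
lemma posSemidef_sqrt {n : ℕ} {A : Matrix (Fin n) (Fin n) ℂ} (hA : A.PosSemidef) :
    hA.sqrt.PosSemidef :=
  (CFC.sqrt_nonneg A).posSemidef

end Matrix.PosSemidef

lemma aux_assoc {n : ℕ} (A B S : Matrix (Fin n) (Fin n) ℂ) (hS : Sᴴ = S) :
    (A * B * S) * (A * B * S)ᴴ = A * (B * (S * S) * Bᴴ) * Aᴴ := by
  simp only [Matrix.conjTranspose_mul, hS, Matrix.mul_assoc]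

/-- Let `Φ` be a quantum channel, `ρ ≥ 0` with `Φ ρ = ρ`, and `Q` the
orthogonal projection onto the range (support) of `ρ`. Then `Tr[(1 − Q) Φ(Q)] = 0`, and
every `σ ≥ 0` supported inside `Q` (i.e. `Q σ Q = σ`) satisfies `Q Φ(σ) Q = Φ(σ)`. -/
theorem channel_preserves_support
    {n : ℕ} (Φ : Matrix (Fin n) (Fin n) ℂ → Matrix (Fin n) (Fin n) ℂ)
    (hΦ : IsQChannel Φ)
    (ρ : Matrix (Fin n) (Fin n) ℂ) (hρ : ρ.PosSemidef) (hfix : Φ ρ = ρ)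
    (Q : Matrix (Fin n) (Fin n) ℂ) (hQh : Q.IsHermitian) (hQi : Q * Q = Q)
    (hQrange : LinearMap.range Q.mulVecLin = LinearMap.range ρ.mulVecLin) :
    ((1 - Q) * Φ Q).trace = 0 ∧
    ∀ σ : Matrix (Fin n) (Fin n) ℂ, σ.PosSemidef → Q * σ * Q = σ →
      Q * Φ σ * Q = Φ σ := by
  obtain ⟨N, K, hK, -⟩ := hΦ
  -- Step 1: Q * ρ = ρ
  have hQρ : Q * ρ = ρ := by
    ext i j
    have hmem : ρ.mulVec (Pi.single j 1) ∈ LinearMap.range Q.mulVecLin := by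
      rw [hQrange]; exact ⟨Pi.single j 1, rfl⟩
    obtain ⟨w, hw⟩ := hmem
    have h1 : Q.mulVec (ρ.mulVec (Pi.single j 1)) = ρ.mulVec (Pi.single j 1) := by
      rw [← hw]
      show Q.mulVec (Q.mulVec w) = Q.mulVec w
      rw [Matrix.mulVec_mulVec, hQi]
    have h2 := congrFun h1 i
    rw [Matrix.mulVec_mulVec] at h2
    simpa [Matrix.mulVec_mulVec] using h2
  have hSsq : hρ.sqrt * hρ.sqrt = ρ := hρ.sqrt_mul_self
  have hSh : (hρ.sqrt)ᴴ = hρ.sqrt := hρ.posSemidef_sqrt.1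
  have hsum0 : ∑ i, ((1 - Q) * K i * hρ.sqrt) * ((1 - Q) * K i * hρ.sqrt)ᴴ = 0 := by
    have heq : ∑ i, ((1 - Q) * K i * hρ.sqrt) * ((1 - Q) * K i * hρ.sqrt)ᴴ
        = (1 - Q) * Φ ρ * (1 - Q)ᴴ := by
      rw [hK, Finset.mul_sum, Finset.sum_mul]
      refine Finset.sum_congr rfl fun i _ => ?_
      rw [aux_assoc _ _ _ hSh, hSsq]
    rw [heq, hfix, Matrix.sub_mul, Matrix.one_mul, hQρ, sub_self, Matrix.zero_mul]
  have hKS : ∀ i, (1 - Q) * K i * hρ.sqrt = 0 :=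
    aux_sum_mul_conjTranspose_eq_zero _ hsum0
  have hKρ : ∀ i, (1 - Q) * K i * ρ = 0 := by
    intro i
    calc (1 - Q) * K i * ρ = ((1 - Q) * K i * hρ.sqrt) * hρ.sqrt := by
          rw [Matrix.mul_assoc ((1 - Q) * K i), hSsq]
      _ = 0 := by rw [hKS i, Matrix.zero_mul]
  have hKQ : ∀ i, (1 - Q) * K i * Q = 0 := by
    intro i
    ext a j
    have hmem : Q.mulVec (Pi.single j 1) ∈ LinearMap.range ρ.mulVecLin := by
      rw [← hQrange]; exact ⟨Pi.single j 1, rfl⟩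
    obtain ⟨w, hw⟩ := hmem
    have h1 : ((1 - Q) * K i).mulVec (Q.mulVec (Pi.single j 1)) = 0 := by
      rw [← hw]
      show ((1 - Q) * K i).mulVec (ρ.mulVec w) = 0
      rw [Matrix.mulVec_mulVec, hKρ i, Matrix.zero_mulVec]
    have h2 := congrFun h1 a
    rw [Matrix.mulVec_mulVec] at h2
    simpa [Matrix.mulVec_mulVec] using h2
  have hQKQ : ∀ i, Q * K i * Q = K i * Q := by
    intro i
    have h := hKQ i
    rw [Matrix.sub_mul, Matrix.sub_mul, Matrix.one_mul, sub_eq_zero] at h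
    exact h.symm
  constructor
  · have h0 : (1 - Q) * Φ Q = 0 := by
      rw [hK, Finset.mul_sum]
      refine Finset.sum_eq_zero fun i _ => ?_
      rw [← Matrix.mul_assoc, ← Matrix.mul_assoc, hKQ i, Matrix.zero_mul]
    rw [h0, Matrix.trace_zero]
  · intro σ _ hσ
    rw [hK, Finset.mul_sum, Finset.sum_mul]
    refine Finset.sum_congr rfl fun i _ => ?_
    have hB : Q * (K i)ᴴ * Q = Q * (K i)ᴴ := by
      have h2 := congrArg Matrix.conjTranspose (hQKQ i)
      simp only [Matrix.conjTranspose_mul, hQh.eq] at h2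
      rw [← Matrix.mul_assoc] at h2
      exact h2
    rw [← hσ]
    simp only [← Matrix.mul_assoc]
    rw [hQKQ i]
    rw [Matrix.mul_assoc (K i * Q * σ) Q ((K i)ᴴ),
      Matrix.mul_assoc (K i * Q * σ) (Q * (K i)ᴴ) Q, hB, ← Matrix.mul_assoc]
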